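/- Let f : ℝ^d → 𝒴 be any deterministic function into a finite set of classes 𝒴, let μ ∈ ℝ^d and λ₁,…,λ_d > 0, and let ε be a random vector whose i-th coordinate is an independent Laplace random variable with location μ_i and scale λ_i. Suppose that for a specific x ∈ ℝ^d there exist a class c_A ∈ 𝒴 and reals p_A, p_B ∈ [0,1] with p_A > p_B, such that P(f(x+ε)=c_A) ≥ p_A ≥ p_B ≥ max_{c ≠ c_A} P(f(x+ε)=c). Then for every δ ∈ ℝ^d satisfying Σ_{i=1}^d |δ_i|/λ_i ≤ (1/2)·log(p_A/p_B), one has P(f(x+δ+ε)=c_A) ≥ P(f(x+δ+ε)=c) for all c ≠ c_A. -/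

import Mathlib

open MeasureTheory ProbabilityTheory

/-- The Laplace measure on `ℝ` with location `m` and scale `l`, given by the density
`z ↦ (1/(2l)) · exp(−|z − m|/l)` with respect to Lebesgue measure. -/
noncomputable def laplaceReal (m l : ℝ) : Measure ℝ :=
  volume.withDensity fun z => ENNReal.ofReal ((2 * l)⁻¹ * Real.exp (-|z - m| / l))

open scoped ENNReal

lemma aux_lintegral_pi_prod {n : ℕ} (μ : Fin n → Measure ℝ) [∀ i, SigmaFinite (μ i)]
    (f : Fin n → ℝ → ℝ≥0∞) (hf : ∀ i, Measurable (f i)) :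
    ∫⁻ x : Fin n → ℝ, ∏ i, f i (x i) ∂Measure.pi μ = ∏ i, ∫⁻ y, f i y ∂μ i := by
  induction n with
  | zero => simp [Measure.pi_of_empty]
  | succ n ih =>
    have hmeas : Measurable fun x : Fin (n+1) → ℝ => ∏ i, f i (x i) :=
      Finset.measurable_prod _ fun i _ => (hf i).comp (measurable_pi_apply i)
    rw [← ((measurePreserving_piFinSuccAbove μ 0).symm).lintegral_comp hmeas]
    simp_rw [MeasurableEquiv.piFinSuccAbove_symm_apply, Fin.insertNthEquiv,
      Equiv.coe_fn_mk, Fin.prod_univ_succ, Fin.insertNth_zero, Fin.cons_zero, Fin.cons_succ,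
      Fin.zero_succAbove, cast_eq]
    rw [lintegral_prod_mul (f := f 0) (g := fun y : Fin n → ℝ => ∏ j, f j.succ (y j))
        (hf 0).aemeasurable
        (Finset.measurable_prod Finset.univ fun j _ =>
          (hf j.succ).comp (measurable_pi_apply j)).aemeasurable,
      ih (fun j => μ j.succ) (fun j => f j.succ) (fun j => hf j.succ)]

lemma aux_pi_withDensity {n : ℕ} (g : Fin n → ℝ → ℝ≥0∞) (hg : ∀ i, Measurable (g i))
    (hfin : ∀ i z, g i z ≠ ∞) :
    Measure.pi (fun i => (volume : Measure ℝ).withDensity (g i)) =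
      (volume : Measure (Fin n → ℝ)).withDensity (fun x => ∏ i, g i (x i)) := by
  have hsf : ∀ i, SigmaFinite ((volume : Measure ℝ).withDensity (g i)) := fun i =>
    SigmaFinite.withDensity_of_ne_top' (hfin i)
  refine Measure.pi_eq fun s hs => ?_
  rw [withDensity_apply _ (MeasurableSet.univ_pi hs),
    ← lintegral_indicator (MeasurableSet.univ_pi hs)]
  have hind : ∀ x : Fin n → ℝ,
      (Set.univ.pi s).indicator (fun x => ∏ i, g i (x i)) x
        = ∏ i, (s i).indicator (g i) (x i) := by
    intro x
    by_cases hx : x ∈ Set.univ.pi s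
    · rw [Set.indicator_of_mem hx]
      exact Finset.prod_congr rfl fun i _ =>
        (Set.indicator_of_mem (hx i (Set.mem_univ i)) _).symm
    · rw [Set.indicator_of_notMem hx]
      obtain ⟨i, hi⟩ : ∃ i, x i ∉ s i := by simpa [Set.mem_pi] using hx
      exact (Finset.prod_eq_zero (Finset.mem_univ i)
        (Set.indicator_of_notMem hi _)).symm
  simp_rw [hind]
  rw [volume_pi, aux_lintegral_pi_prod _ _ (fun i => (hg i).indicator (hs i))]
  exact Finset.prod_congr rfl fun i _ => by
    rw [lintegral_indicator (hs i), withDensity_apply _ (hs i)]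

lemma laplace_density_measurable (m l : ℝ) :
    Measurable fun z : ℝ => ENNReal.ofReal ((2 * l)⁻¹ * Real.exp (-|z - m| / l)) := by
  fun_prop

lemma laplace_integrable (m l : ℝ) (hl : 0 < l) :
    Integrable (fun z : ℝ => Real.exp (-|z - m| / l)) := by
  have h1 : IntegrableOn (fun z : ℝ => Real.exp (-|z - m| / l)) (Set.Ioi m) := by
    have := ((exp_neg_integrableOn_Ioi m (show (0:ℝ) < 1 / l by positivity)).const_mul
      (Real.exp (m / l)))
    refine IntegrableOn.congr_fun this (fun z hz => ?_) measurableSet_Ioi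
    have hz' : m < z := hz
    rw [abs_of_nonneg (by linarith), ← Real.exp_add]
    congr 1
    ring
  have h2 : IntegrableOn (fun z : ℝ => Real.exp (-|z - m| / l)) (Set.Iic m) := by
    have h2' : IntegrableOn (fun z : ℝ => Real.exp (-|(-z) - m| / l)) (Set.Ioi (-m)) := by
      have := ((exp_neg_integrableOn_Ioi (-m) (show (0:ℝ) < 1 / l by positivity)).const_mul
        (Real.exp (-m / l)))
      refine IntegrableOn.congr_fun this (fun z hz => ?_) measurableSet_Ioi
      have hz' : -m < z := hz
      rw [show |(-z) - m| = z + m by rw [abs_of_nonpos (by linarith)]; ring, ← Real.exp_add]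
      congr 1
      ring
    have h2'' : Integrable ((Set.Ioi (-m)).indicator fun z : ℝ => Real.exp (-|(-z) - m| / l)) :=
      (integrable_indicator_iff measurableSet_Ioi).2 h2'
    have h2''' := h2''.comp_neg
    have heq : (fun z : ℝ => ((Set.Ioi (-m)).indicator fun z : ℝ => Real.exp (-|(-z) - m| / l)) (-z))
        = (Set.Iio m).indicator fun z : ℝ => Real.exp (-|z - m| / l) := by
      funext z
      by_cases hz : z < m
      · have hm1 : -z ∈ Set.Ioi (-m) := by simpa using hz
        have hm2 : z ∈ Set.Iio m := hz
        rw [Set.indicator_of_mem hm1, Set.indicator_of_mem hm2]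
        simp
      · have hm1 : -z ∉ Set.Ioi (-m) := by simpa using hz
        have hm2 : z ∉ Set.Iio m := hz
        rw [Set.indicator_of_notMem hm1, Set.indicator_of_notMem hm2]
    rw [heq] at h2'''
    have := (integrable_indicator_iff measurableSet_Iio).1 h2'''
    rwa [integrableOn_Iic_iff_integrableOn_Iio]
  have : IntegrableOn (fun z : ℝ => Real.exp (-|z - m| / l)) (Set.Iic m ∪ Set.Ioi m) :=
    integrableOn_union.2 ⟨h2, h1⟩
  rwa [Set.Iic_union_Ioi, integrableOn_univ] at this

lemma laplace_isFiniteMeasure (m l : ℝ) (hl : 0 < l) : IsFiniteMeasure (laplaceReal m l) := by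
  constructor
  rw [laplaceReal, withDensity_apply _ MeasurableSet.univ, Measure.restrict_univ]
  exact ((laplace_integrable m l hl).const_mul _).lintegral_lt_top

lemma laplace_shift_bound {d : ℕ} (μ lam : Fin d → ℝ) (hlam : ∀ i, 0 < lam i)
    (v : Fin d → ℝ) (S : Set (Fin d → ℝ)) (hS : MeasurableSet S) :
    Measure.pi (fun i => laplaceReal (μ i) (lam i)) ((fun e => e + v) ⁻¹' S)
      ≤ ENNReal.ofReal (Real.exp (∑ i, |v i| / lam i))
        * Measure.pi (fun i => laplaceReal (μ i) (lam i)) S := by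
  set g : Fin d → ℝ → ℝ≥0∞ :=
    fun i z => ENNReal.ofReal ((2 * lam i)⁻¹ * Real.exp (-|z - μ i| / lam i)) with hgdef
  have hgm : ∀ i, Measurable (g i) := fun i => laplace_density_measurable _ _
  have hgfin : ∀ i z, g i z ≠ ∞ := fun i z => ENNReal.ofReal_ne_top
  have hpi : Measure.pi (fun i => laplaceReal (μ i) (lam i))
      = (volume : Measure (Fin d → ℝ)).withDensity (fun x => ∏ i, g i (x i)) := by
    rw [← aux_pi_withDensity g hgm hgfin]; rfl
  set D : (Fin d → ℝ) → ℝ≥0∞ := fun x => ∏ i, g i (x i) with hDdef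
  have hDm : Measurable D :=
    Finset.measurable_prod _ fun i _ => (hgm i).comp (measurable_pi_apply i)
  have hTm : Measurable fun e : Fin d → ℝ => e + v := measurable_id.add_const v
  rw [hpi, withDensity_apply _ (hTm hS), withDensity_apply _ hS,
    ← lintegral_indicator (hTm hS), ← lintegral_indicator hS]
  have key : ∀ x : Fin d → ℝ,
      ((fun e => e + v) ⁻¹' S).indicator D x
        ≤ ENNReal.ofReal (Real.exp (∑ i, |v i| / lam i)) * (S.indicator D) (x + v) := by
    intro x
    by_cases hx : x + v ∈ S
    · rw [Set.indicator_of_mem hx, Set.indicator_of_mem (show x ∈ (fun e => e + v) ⁻¹' S from hx)]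
      have hof : ENNReal.ofReal (Real.exp (∑ i, |v i| / lam i))
          = ∏ i, ENNReal.ofReal (Real.exp (|v i| / lam i)) := by
        rw [Real.exp_sum, ← ENNReal.ofReal_prod_of_nonneg]
        exact fun i _ => (Real.exp_pos _).le
      rw [hof, hDdef]
      simp only []
      rw [← Finset.prod_mul_distrib]
      refine Finset.prod_le_prod' fun i _ => ?_
      have hvx : (x + v) i = x i + v i := rfl
      rw [hgdef]
      simp only [hvx]
      rw [← ENNReal.ofReal_mul (Real.exp_pos _).le]
      refine ENNReal.ofReal_le_ofReal ?_
      have habs : |x i + v i - μ i| ≤ |x i - μ i| + |v i| := by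
        have := abs_add_le (x i - μ i) (v i)
        have heq : x i - μ i + v i = x i + v i - μ i := by ring
        rwa [heq] at this
      have hexp : Real.exp (-|x i - μ i| / lam i)
          ≤ Real.exp ((|v i| - |x i + v i - μ i|) / lam i) := by
        apply Real.exp_le_exp.2
        apply div_le_div_of_nonneg_right ?h (hlam i).le
        linarith
      calc (2 * lam i)⁻¹ * Real.exp (-|x i - μ i| / lam i)
          ≤ (2 * lam i)⁻¹ * Real.exp ((|v i| - |x i + v i - μ i|) / lam i) := by
            apply mul_le_mul_of_nonneg_left hexp
            have := hlam i
            positivity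
        _ = Real.exp (|v i| / lam i) * ((2 * lam i)⁻¹ * Real.exp (-|x i + v i - μ i| / lam i)) := by
            rw [show (|v i| - |x i + v i - μ i|) / lam i
              = |v i| / lam i + -|x i + v i - μ i| / lam i by ring, Real.exp_add]
            ring
    · rw [Set.indicator_of_notMem (show x ∉ (fun e => e + v) ⁻¹' S from hx)]
      exact zero_le
  calc ∫⁻ x, ((fun e => e + v) ⁻¹' S).indicator D x
      ≤ ∫⁻ x, ENNReal.ofReal (Real.exp (∑ i, |v i| / lam i)) * (S.indicator D) (x + v) :=
        lintegral_mono key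
    _ = ENNReal.ofReal (Real.exp (∑ i, |v i| / lam i))
        * ∫⁻ x, (S.indicator D) (x + v) := lintegral_const_mul _ ((hDm.indicator hS).comp hTm)
    _ = ENNReal.ofReal (Real.exp (∑ i, |v i| / lam i)) * ∫⁻ y, S.indicator D y := by
        rw [(measurePreserving_add_right (volume : Measure (Fin d → ℝ)) v).lintegral_comp
          (hDm.indicator hS)]

/-- Certified region for anisotropic Laplace smoothing (weighted ℓ1 condition). -/
theorem laplace_certified_region
    {d : ℕ} {Y : Type*} [Fintype Y] [MeasurableSpace Y] [MeasurableSingletonClass Y]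
    (f : (Fin d → ℝ) → Y) (hf : Measurable f)
    (μ : Fin d → ℝ) (lam : Fin d → ℝ) (hlam : ∀ i, 0 < lam i)
    (noise : Measure (Fin d → ℝ))
    (hnoise : noise = Measure.pi fun i : Fin d => laplaceReal (μ i) (lam i))
    (x : Fin d → ℝ) (cA : Y) (pA pB : ℝ)
    (hpA : pA ∈ Set.Icc (0 : ℝ) 1) (hpB : pB ∈ Set.Icc (0 : ℝ) 1)
    (hABstrict : pA > pB)
    (hA : (noise {e | f (x + e) = cA}).toReal ≥ pA)
    (hB : ∀ c : Y, c ≠ cA → pB ≥ (noise {e | f (x + e) = c}).toReal)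
    (δ : Fin d → ℝ)
    (hδ : (∑ i, |δ i| / lam i) ≤ (1 / 2) * Real.log (pA / pB)) :
    ∀ c : Y, c ≠ cA →
      (noise {e | f (x + δ + e) = cA}).toReal ≥
        (noise {e | f (x + δ + e) = c}).toReal := by
  subst hnoise
  intro c hc
  set ν := Measure.pi fun i : Fin d => laplaceReal (μ i) (lam i) with hν
  haveI : ∀ i : Fin d, IsFiniteMeasure (laplaceReal (μ i) (lam i)) :=
    fun i => laplace_isFiniteMeasure _ _ (hlam i)
  haveI : IsFiniteMeasure ν := by rw [hν]; infer_instance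
  have hadd : ∀ y : Fin d → ℝ, Measurable fun e : Fin d → ℝ => y + e :=
    fun y => measurable_const.add measurable_id
  have hmeasSet : ∀ y : Y, MeasurableSet {e : Fin d → ℝ | f (x + e) = y} :=
    fun y => (hf.comp (hadd x)) (measurableSet_singleton y)
  have hrew : ∀ y : Y, {e : Fin d → ℝ | f (x + δ + e) = y}
      = (fun e => e + δ) ⁻¹' {e : Fin d → ℝ | f (x + e) = y} := by
    intro y
    ext e
    have harg : x + (e + δ) = x + δ + e := by abel
    simp [Set.mem_preimage, harg]
  set t := ∑ i, |δ i| / lam i with htdef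
  have ht0 : 0 ≤ t := Finset.sum_nonneg fun i _ => div_nonneg (abs_nonneg _) (hlam i).le
  set E := Real.exp t with hEdef
  have hE : 0 < E := Real.exp_pos t
  have h1 : ν ((fun e => e + δ) ⁻¹' {e : Fin d → ℝ | f (x + e) = c})
      ≤ ENNReal.ofReal E * ν {e : Fin d → ℝ | f (x + e) = c} :=
    laplace_shift_bound μ lam hlam δ _ (hmeasSet c)
  have h2 : ν {e : Fin d → ℝ | f (x + e) = cA}
      ≤ ENNReal.ofReal E * ν ((fun e => e + δ) ⁻¹' {e : Fin d → ℝ | f (x + e) = cA}) := by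
    have h2' := laplace_shift_bound μ lam hlam (-δ)
      ((fun e => e + δ) ⁻¹' {e : Fin d → ℝ | f (x + e) = cA})
      ((measurable_id.add_const δ) (hmeasSet cA))
    have hcomp : (fun e : Fin d → ℝ => e + (-δ)) ⁻¹'
        ((fun e => e + δ) ⁻¹' {e : Fin d → ℝ | f (x + e) = cA})
        = {e : Fin d → ℝ | f (x + e) = cA} := by
      ext e
      have : e + -δ + δ = e := by abel
      simp [Set.mem_preimage, this]
    have hsum : ∑ i, |(-δ) i| / lam i = t := by simp [htdef]
    rwa [hcomp, hsum] at h2'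
  -- pass to real numbers
  have hb : (ν ((fun e => e + δ) ⁻¹' {e : Fin d → ℝ | f (x + e) = c})).toReal
      ≤ E * (ν {e : Fin d → ℝ | f (x + e) = c}).toReal := by
    have := ENNReal.toReal_mono
      (ENNReal.mul_ne_top ENNReal.ofReal_ne_top (measure_ne_top _ _)) h1
    rwa [ENNReal.toReal_mul, ENNReal.toReal_ofReal hE.le] at this
  have ha : (ν {e : Fin d → ℝ | f (x + e) = cA}).toReal
      ≤ E * (ν ((fun e => e + δ) ⁻¹' {e : Fin d → ℝ | f (x + e) = cA})).toReal := by
    have := ENNReal.toReal_mono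
      (ENNReal.mul_ne_top ENNReal.ofReal_ne_top (measure_ne_top _ _)) h2
    rwa [ENNReal.toReal_mul, ENNReal.toReal_ofReal hE.le] at this
  rw [hrew cA, hrew c]
  set X := (ν ((fun e => e + δ) ⁻¹' {e : Fin d → ℝ | f (x + e) = cA})).toReal with hX
  set Bv := (ν ((fun e => e + δ) ⁻¹' {e : Fin d → ℝ | f (x + e) = c})).toReal with hBv
  have hX0 : 0 ≤ X := ENNReal.toReal_nonneg
  have hBv0 : 0 ≤ Bv := ENNReal.toReal_nonneg
  have hBc : (ν {e : Fin d → ℝ | f (x + e) = c}).toReal ≤ pB := hB c hc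
  have hBvE : Bv ≤ E * pB := le_trans hb (by nlinarith)
  have hpAX : pA ≤ E * X := le_trans hA ha
  rcases eq_or_lt_of_le hpB.1 with hpB0 | hpB0
  · -- pB = 0
    have : Bv ≤ 0 := by rw [← hpB0] at hBvE; linarith
    show Bv ≤ X
    linarith
  · -- 0 < pB
    have hpA0 : 0 < pA := lt_trans hpB0 hABstrict
    have hrat : 0 < pA / pB := div_pos hpA0 hpB0
    have hEE : E * E ≤ pA / pB := by
      rw [hEdef, ← Real.exp_add]
      calc Real.exp (t + t) ≤ Real.exp (Real.log (pA / pB)) :=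
            Real.exp_le_exp.2 (by linarith)
        _ = pA / pB := Real.exp_log hrat
    have hEEpB : E * E * pB ≤ pA := by
      have h := mul_le_mul_of_nonneg_right hEE hpB0.le
      rwa [div_mul_cancel₀ pA hpB0.ne'] at h
    show Bv ≤ X
    have h3 : E * (E * pB) ≤ E * X := by nlinarith
    have h4 : E * pB ≤ X := le_of_mul_le_mul_left h3 hE
    linarith
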